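/- arXiv:1007.4238 — 2 statements merged into one kernel-verified Lean document; each statement's English description precedes it below -/
import Mathlib

section
/- Let X be an ergodic Banach space, let π be an action of ℍ on X by linear isometric automorphisms, and let f : ℍ → X be a Lipschitz 1-cocycle for π. Let P : X → X be the projection onto the π(c)-invariant vectors defined by Px := lim_{N→∞} (1/N) ∑_{n=0}^{N−1} π(c)^n x (the limit exists by ergodicity), where c = aba⁻¹b⁻¹. Then Pf(c) = 0. -/
open scoped BigOperators

/-- The discrete Heisenberg group `ℍ`, realized via the coordinates of the
3×3 upper-triangular integer matrices `[[1, x, z], [0, 1, y], [0, 0, 1]]`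
with unit diagonal. -/
@[ext] structure Heis where
  x : ℤ
  y : ℤ
  z : ℤ

namespace Heis

instance : One Heis := ⟨⟨0, 0, 0⟩⟩
instance : Mul Heis := ⟨fun g h => ⟨g.x + h.x, g.y + h.y, g.z + h.z + g.x * h.y⟩⟩
instance : Inv Heis := ⟨fun g => ⟨-g.x, -g.y, -g.z + g.x * g.y⟩⟩

@[simp] lemma mul_def (g h : Heis) :
    g * h = ⟨g.x + h.x, g.y + h.y, g.z + h.z + g.x * h.y⟩ := rfl
@[simp] lemma one_def : (1 : Heis) = ⟨0, 0, 0⟩ := rfl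
@[simp] lemma inv_def (g : Heis) : g⁻¹ = ⟨-g.x, -g.y, -g.z + g.x * g.y⟩ := rfl

instance : Group Heis where
  mul_assoc g h k := by ext <;> simp <;> ring
  one_mul g := by ext <;> simp
  mul_one g := by ext <;> simp
  inv_mul_cancel g := by ext <;> simp <;> ring

/-- The generator `a`. -/
def A : Heis := ⟨1, 0, 0⟩
/-- The generator `b`. -/
def B : Heis := ⟨0, 1, 0⟩
/-- The commutator `c = a * b * a⁻¹ * b⁻¹`, a central element. -/
def C : Heis := A * B * A⁻¹ * B⁻¹
/-- The symmetric generating set `S = {a, b, a⁻¹, b⁻¹}`. -/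
def S : Set Heis := {A, B, A⁻¹, B⁻¹}

/-- The word length of `g` with respect to the generating set `S`. -/
noncomputable def wordLength (g : Heis) : ℕ :=
  sInf {n : ℕ | ∃ l : List Heis, l.length = n ∧ (∀ s ∈ l, s ∈ S) ∧ l.prod = g}

/-- The left-invariant word metric `d_W` on `ℍ` associated to `S`. -/
noncomputable def dW (g h : Heis) : ℕ := wordLength (g⁻¹ * h)

end Heis

/-- A Banach space `X` is ergodic if for every linear isometry `T : X → X` and every
`x ∈ X` the sequence of ergodic averages `(1/n)·∑_{j=0}^{n−1} T^j x` converges in norm. -/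
def IsErgodicSpace (X : Type*) [NormedAddCommGroup X] [NormedSpace ℝ X] : Prop :=
  ∀ T : X →ₗᵢ[ℝ] X, ∀ v : X, ∃ w : X,
    Filter.Tendsto (fun n : ℕ => (n : ℝ)⁻¹ • ∑ j ∈ Finset.range n, (⇑T)^[j] v)
      Filter.atTop (nhds w)


namespace Heis

lemma A_pow (m : ℕ) : A ^ m = ⟨m, 0, 0⟩ := by
  induction m with
  | zero => rfl
  | succ n ih => rw [pow_succ, ih]; ext <;> simp [A] <;> push_cast <;> ring

lemma B_pow (m : ℕ) : B ^ m = ⟨0, m, 0⟩ := by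
  induction m with
  | zero => rfl
  | succ n ih => rw [pow_succ, ih]; ext <;> simp [B] <;> push_cast <;> ring

lemma C_pow (m : ℕ) : C ^ m = ⟨0, 0, m⟩ := by
  induction m with
  | zero => rfl
  | succ n ih => rw [pow_succ, ih]; ext <;> simp [C, A, B] <;> push_cast <;> ring

lemma wordLength_C_sq (m : ℕ) : wordLength (C ^ (m * m)) ≤ 4 * m := by
  apply Nat.sInf_le
  refine ⟨List.replicate m A ++ List.replicate m B ++ List.replicate m A⁻¹
      ++ List.replicate m B⁻¹, by simp; try ring, ?_, ?_⟩
  · intro s hs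
    simp only [List.mem_append] at hs
    rcases hs with ((h|h)|h)|h <;>
      simp [S, List.eq_of_mem_replicate h]
  · rw [List.prod_append, List.prod_append, List.prod_append]
    simp only [List.prod_replicate]
    rw [inv_pow, inv_pow, A_pow, B_pow, C_pow]
    ext <;> simp <;> push_cast <;> ring

end Heis

/-- **Section 2 (analysis of `Pf`).** Let `X` be an ergodic Banach space, `π` an action of
`ℍ` on `X` by linear isometric automorphisms, `f : ℍ → X` a Lipschitz `1`-cocycle, and let
`P : X → X` be the projection onto the `π(c)`-invariant vectors,
`Pv = lim_N (1/N)·∑_{n<N} π(c)^n v`. Then `P(f(c)) = 0`. -/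
theorem heisenberg_cocycle_invariant_part_vanishes
    (X : Type*) [NormedAddCommGroup X] [NormedSpace ℝ X] [CompleteSpace X]
    (hX : IsErgodicSpace X)
    (π : Heis →* (X ≃ₗᵢ[ℝ] X))
    (f : Heis → X) (hcocycle : ∀ g h : Heis, f (g * h) = π g (f h) + f g)
    (hLip : ∃ L : ℝ, ∀ g h : Heis, ‖f g - f h‖ ≤ L * (Heis.dW g h : ℝ))
    (P : X → X)
    (hP : ∀ v : X,
      Filter.Tendsto (fun N : ℕ => (N : ℝ)⁻¹ • ∑ n ∈ Finset.range N, (π Heis.C ^ n) v)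
        Filter.atTop (nhds (P v))) :
    P (f Heis.C) = 0 := by
  obtain ⟨L, hL⟩ := hLip
  have hf1 : f 1 = 0 := by
    have h := hcocycle 1 1
    simp only [one_mul, map_one, LinearIsometryEquiv.coe_one, id_eq] at h
    exact left_eq_add.mp h
  have hsum : ∀ N : ℕ, f (Heis.C ^ N) = ∑ n ∈ Finset.range N, (π Heis.C ^ n) (f Heis.C) := by
    intro N
    induction N with
    | zero => simpa using hf1
    | succ n ih =>
      rw [pow_succ', hcocycle, ih, Finset.sum_range_succ', map_sum]
      congr 1
      exact Finset.sum_congr rfl fun k _ => by rw [pow_succ']; rfl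
  have hbound : ∀ m : ℕ, ‖((m * m : ℕ) : ℝ)⁻¹ • f (Heis.C ^ (m * m))‖ ≤ 4 * |L| / m := by
    intro m
    rcases Nat.eq_zero_or_pos m with hm | hm
    · subst hm; simp [hf1]
    have h1 : ‖f (Heis.C ^ (m * m))‖ ≤ L * (Heis.wordLength (Heis.C ^ (m * m)) : ℝ) := by
      have := hL 1 (Heis.C ^ (m * m))
      rw [hf1, zero_sub, norm_neg] at this
      simpa [Heis.dW] using this
    have h2 : ‖f (Heis.C ^ (m * m))‖ ≤ |L| * (4 * m : ℝ) := by
      refine h1.trans ?_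
      calc L * (Heis.wordLength (Heis.C ^ (m * m)) : ℝ)
          ≤ |L| * (Heis.wordLength (Heis.C ^ (m * m)) : ℝ) := by
            exact mul_le_mul_of_nonneg_right (le_abs_self L) (by positivity)
        _ ≤ |L| * (4 * m : ℝ) := by
            apply mul_le_mul_of_nonneg_left _ (abs_nonneg L)
            exact_mod_cast Heis.wordLength_C_sq m
    rw [norm_smul]
    have hmpos : (0 : ℝ) < m := by exact_mod_cast hm
    have hn : ‖((m * m : ℕ) : ℝ)⁻¹‖ = ((m : ℝ) * m)⁻¹ := by
      rw [Real.norm_eq_abs, abs_inv]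
      push_cast
      rw [abs_of_nonneg (by positivity)]
    rw [hn, div_eq_mul_inv]
    calc ((m : ℝ) * m)⁻¹ * ‖f (Heis.C ^ (m * m))‖
        ≤ ((m : ℝ) * m)⁻¹ * (|L| * (4 * m)) :=
          mul_le_mul_of_nonneg_left h2 (by positivity)
      _ = 4 * |L| * (m : ℝ)⁻¹ := by field_simp
  have hmono : Filter.Tendsto (fun m : ℕ => m * m) Filter.atTop Filter.atTop := by
    apply Filter.tendsto_atTop_mono _ Filter.tendsto_id
    intro m
    cases m with
    | zero => simp
    | succ n => exact Nat.le_mul_of_pos_left _ n.succ_pos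
  have h1 : Filter.Tendsto
      (fun m : ℕ => ((m * m : ℕ) : ℝ)⁻¹ • ∑ n ∈ Finset.range (m * m), (π Heis.C ^ n) (f Heis.C))
      Filter.atTop (nhds (P (f Heis.C))) := (hP (f Heis.C)).comp hmono
  have h2 : Filter.Tendsto
      (fun m : ℕ => ((m * m : ℕ) : ℝ)⁻¹ • ∑ n ∈ Finset.range (m * m), (π Heis.C ^ n) (f Heis.C))
      Filter.atTop (nhds 0) := by
    apply squeeze_zero_norm (fun m => ?_) (tendsto_const_div_atTop_nhds_zero_nat (4 * |L|))
    rw [← hsum]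
    exact hbound m
  exact tendsto_nhds_unique h1 h2
end

section
/- Let p ≥ 2, K > 0, and let (X, ‖·‖) be a Banach space satisfying the p-convexity inequality with constant K. Let π be an action of ℍ on X by linear isometric automorphisms and let f : ℍ → X be a 1-Lipschitz 1-cocycle for π. Then for every ℓ, k, m ∈ ℕ there exist integers i ∈ [k+1, k+m] and j ∈ [0, 2^ℓ − 1] such that for all n ∈ ℕ: ‖π(c^{−j·2^{iℓ}}) P_{(i+1)ℓ} f(c^{n²}) − P_{iℓ} f(c^{n²})‖ ≤ 16·K·n / m^{1/p}. -/
open scoped BigOperators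

/-- A Banach space `(X, ‖·‖)` satisfies the `p`-convexity inequality with constant `K`:
`‖(x+y)/2‖^p ≤ (‖x‖^p + ‖y‖^p)/2 − K^{−p}·‖(x−y)/2‖^p` for all `x, y ∈ X`. -/
def PConvex (X : Type*) [NormedAddCommGroup X] [NormedSpace ℝ X] (p K : ℝ) : Prop :=
  ∀ v w : X, ‖(2:ℝ)⁻¹ • (v + w)‖ ^ p ≤
    (‖v‖ ^ p + ‖w‖ ^ p) / 2 - K ^ (-p) * ‖(2:ℝ)⁻¹ • (v - w)‖ ^ p

/-- The averaging operator `P_n = 2^{−n}·∑_{j<2^n} π(c)^j` associated to an action `π` of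
`ℍ` by linear isometric automorphisms, where `c = aba⁻¹b⁻¹`. -/
noncomputable def Pop {X : Type*} [NormedAddCommGroup X] [NormedSpace ℝ X]
    (π : Heis →* (X ≃ₗᵢ[ℝ] X)) (n : ℕ) (v : X) : X :=
  ((2 : ℝ) ^ n)⁻¹ • ∑ j ∈ Finset.range (2 ^ n), (π Heis.C ^ j) v


namespace HeisAux


lemma C_spec : Heis.C = ⟨0, 0, 1⟩ := by
  show Heis.A * Heis.B * Heis.A⁻¹ * Heis.B⁻¹ = _
  ext <;> simp [Heis.A, Heis.B]

lemma C_pow (t : ℕ) : Heis.C ^ t = ⟨0, 0, (t : ℤ)⟩ := by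
  induction t with
  | zero => simp [pow_zero]
  | succ t ih => rw [pow_succ, ih, C_spec]; ext <;> simp <;> push_cast <;> ring

lemma C_pow_central (t : ℕ) (g : Heis) : Heis.C ^ t * g = g * Heis.C ^ t := by
  rw [C_pow]; ext <;> simp <;> ring

lemma inv_central {G : Type*} [Group G] {c : G} (h : ∀ g, c * g = g * c) (g : G) :
    c⁻¹ * g = g * c⁻¹ := by
  calc c⁻¹ * g = c⁻¹ * (g * c) * c⁻¹ := by group
  _ = c⁻¹ * (c * g) * c⁻¹ := by rw [← h]
  _ = g * c⁻¹ := by group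

lemma A_pow (n : ℕ) : Heis.A ^ n = ⟨(n : ℤ), 0, 0⟩ := by
  induction n with
  | zero => simp [pow_zero]
  | succ n ih => rw [pow_succ, ih]; ext <;> simp [Heis.A] <;> push_cast <;> ring

lemma B_pow (n : ℕ) : Heis.B ^ n = ⟨0, (n : ℤ), 0⟩ := by
  induction n with
  | zero => simp [pow_zero]
  | succ n ih => rw [pow_succ, ih]; ext <;> simp [Heis.B] <;> push_cast <;> ring

lemma comm_identity (n : ℕ) :
    Heis.A ^ n * Heis.B ^ n * (Heis.A ^ n)⁻¹ * (Heis.B ^ n)⁻¹ = Heis.C ^ (n ^ 2) := by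
  rw [A_pow, B_pow, C_pow]; ext <;> simp <;> push_cast <;> ring

lemma wordLength_le_one {g : Heis} (hg : g ∈ Heis.S) : Heis.wordLength g ≤ 1 := by
  apply Nat.sInf_le
  exact ⟨[g], by simp, by simpa using hg, by simp⟩

lemma A_inv_mem : Heis.A⁻¹ ∈ Heis.S := by simp [Heis.S]
lemma B_inv_mem : Heis.B⁻¹ ∈ Heis.S := by simp [Heis.S]



open Finset

lemma jensen_rpow {ι : Type*} {p : ℝ} (hp : 1 ≤ p) (s : Finset ι) (hs : s.Nonempty)
    (a : ι → ℝ) (ha : ∀ i ∈ s, 0 ≤ a i) :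
    ((s.card : ℝ)⁻¹ * ∑ i ∈ s, a i) ^ p ≤ (s.card : ℝ)⁻¹ * ∑ i ∈ s, a i ^ p := by
  have hcard : (0 : ℝ) < s.card := by
    exact_mod_cast Finset.card_pos.mpr hs
  have h := Real.rpow_arith_mean_le_arith_mean_rpow s (fun _ => (s.card : ℝ)⁻¹) a
    (fun i _ => by positivity)
    (by rw [Finset.sum_const, nsmul_eq_mul]; field_simp) ha hp
  calc ((s.card : ℝ)⁻¹ * ∑ i ∈ s, a i) ^ p
      = (∑ i ∈ s, (s.card : ℝ)⁻¹ * a i) ^ p := by rw [Finset.mul_sum]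
    _ ≤ ∑ i ∈ s, (s.card : ℝ)⁻¹ * a i ^ p := h
    _ = (s.card : ℝ)⁻¹ * ∑ i ∈ s, a i ^ p := by rw [Finset.mul_sum]

lemma jensen_norm_rpow {X : Type*} [NormedAddCommGroup X] [NormedSpace ℝ X]
    {ι : Type*} {p : ℝ} (hp : 1 ≤ p) (s : Finset ι) (hs : s.Nonempty) (v : ι → X) :
    ‖(s.card : ℝ)⁻¹ • ∑ i ∈ s, v i‖ ^ p ≤ (s.card : ℝ)⁻¹ * ∑ i ∈ s, ‖v i‖ ^ p := by
  have hcard : (0 : ℝ) < s.card := by exact_mod_cast Finset.card_pos.mpr hs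
  have h1 : ‖(s.card : ℝ)⁻¹ • ∑ i ∈ s, v i‖ ≤ (s.card : ℝ)⁻¹ * ∑ i ∈ s, ‖v i‖ := by
    rw [norm_smul, Real.norm_eq_abs, abs_of_nonneg (by positivity)]
    have := norm_sum_le s v
    gcongr
  calc ‖(s.card : ℝ)⁻¹ • ∑ i ∈ s, v i‖ ^ p
      ≤ ((s.card : ℝ)⁻¹ * ∑ i ∈ s, ‖v i‖) ^ p := by
        apply Real.rpow_le_rpow (norm_nonneg _) h1 (by linarith)
    _ ≤ (s.card : ℝ)⁻¹ * ∑ i ∈ s, ‖v i‖ ^ p :=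
        jensen_rpow hp s hs _ (fun i _ => norm_nonneg _)

lemma varineq {X : Type*} [NormedAddCommGroup X] [NormedSpace ℝ X]
    {p K : ℝ} (hp : 1 ≤ p) (hK : 0 < K) (hX : PConvex X p K)
    (M : ℕ) (hM : 0 < M) (w : ℕ → X) :
    (M : ℝ)⁻¹ * ∑ j ∈ Finset.range M, ‖w j - (M : ℝ)⁻¹ • ∑ j' ∈ Finset.range M, w j'‖ ^ p
      ≤ (2 * K) ^ p *
        ((M : ℝ)⁻¹ * ∑ j ∈ Finset.range M, ‖w j‖ ^ p
          - ‖(M : ℝ)⁻¹ • ∑ j' ∈ Finset.range M, w j'‖ ^ p) := by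
  have hMR : (0 : ℝ) < M := by exact_mod_cast hM
  set xb : X := (M : ℝ)⁻¹ • ∑ j' ∈ Finset.range M, w j' with hxb
  set T : Finset (ℕ × ℕ) := Finset.range M ×ˢ Finset.range M with hT
  have hTcard : (T.card : ℝ) = (M : ℝ) * (M : ℝ) := by
    rw [hT, Finset.card_product, Finset.card_range]; push_cast; ring
  have hTne : T.Nonempty := by
    rw [hT]; exact Finset.Nonempty.product (Finset.nonempty_range_iff.mpr hM.ne')
      (Finset.nonempty_range_iff.mpr hM.ne')
  -- xb as a double average of midpoints
  have hmid : ∑ q ∈ T, (2 : ℝ)⁻¹ • (w q.1 + w q.2) = (M : ℝ) • ∑ j ∈ Finset.range M, w j := by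
    rw [hT, Finset.sum_product]
    have : ∀ j ∈ Finset.range M,
        ∑ j' ∈ Finset.range M, (2 : ℝ)⁻¹ • (w j + w j')
          = (2 : ℝ)⁻¹ • ((M : ℝ) • w j + ∑ j' ∈ Finset.range M, w j') := by
      intro j _
      rw [← Finset.smul_sum, Finset.sum_add_distrib, Finset.sum_const, Finset.card_range,
        ← Nat.cast_smul_eq_nsmul ℝ]
    rw [Finset.sum_congr rfl this, ← Finset.smul_sum, Finset.sum_add_distrib,
      ← Finset.smul_sum, Finset.sum_const, Finset.card_range, ← Nat.cast_smul_eq_nsmul ℝ]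
    module
  have hxb2 : xb = (T.card : ℝ)⁻¹ • ∑ q ∈ T, (2 : ℝ)⁻¹ • (w q.1 + w q.2) := by
    rw [hmid, hTcard, smul_smul, hxb]
    congr 1
    field_simp
  -- Jensen for the double average
  have hJ : ‖xb‖ ^ p ≤ (T.card : ℝ)⁻¹ * ∑ q ∈ T, ‖(2 : ℝ)⁻¹ • (w q.1 + w q.2)‖ ^ p := by
    rw [hxb2]; exact jensen_norm_rpow hp T hTne _
  -- p-convexity pairwise, summed
  have hPC : ∑ q ∈ T, ‖(2 : ℝ)⁻¹ • (w q.1 + w q.2)‖ ^ p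
      ≤ (M : ℝ) * ∑ j ∈ Finset.range M, ‖w j‖ ^ p
        - K ^ (-p) * ∑ q ∈ T, ‖(2 : ℝ)⁻¹ • (w q.1 - w q.2)‖ ^ p := by
    have h1 : ∑ q ∈ T, ‖(2 : ℝ)⁻¹ • (w q.1 + w q.2)‖ ^ p
        ≤ ∑ q ∈ T, ((‖w q.1‖ ^ p + ‖w q.2‖ ^ p) / 2
            - K ^ (-p) * ‖(2 : ℝ)⁻¹ • (w q.1 - w q.2)‖ ^ p) :=
      Finset.sum_le_sum (fun q _ => hX (w q.1) (w q.2))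
    have h2 : ∑ q ∈ T, ((‖w q.1‖ ^ p + ‖w q.2‖ ^ p) / 2
            - K ^ (-p) * ‖(2 : ℝ)⁻¹ • (w q.1 - w q.2)‖ ^ p)
        = (M : ℝ) * ∑ j ∈ Finset.range M, ‖w j‖ ^ p
            - K ^ (-p) * ∑ q ∈ T, ‖(2 : ℝ)⁻¹ • (w q.1 - w q.2)‖ ^ p := by
      rw [Finset.sum_sub_distrib, ← Finset.mul_sum]
      congr 1
      rw [hT, Finset.sum_product]
      have : ∀ j ∈ Finset.range M, ∑ j' ∈ Finset.range M,
          ((‖w j‖ ^ p + ‖w j'‖ ^ p) / 2)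
            = ((M : ℝ) * ‖w j‖ ^ p + ∑ j' ∈ Finset.range M, ‖w j'‖ ^ p) / 2 := by
        intro j _
        rw [← Finset.sum_div, Finset.sum_add_distrib, Finset.sum_const, Finset.card_range,
          nsmul_eq_mul]
      rw [Finset.sum_congr rfl this, ← Finset.sum_div, Finset.sum_add_distrib,
        ← Finset.mul_sum, Finset.sum_const, Finset.card_range, nsmul_eq_mul]
      ring
    linarith
  -- combined: the half-difference sum controls the variance deficit
  have hC : K ^ (-p) * ((T.card : ℝ)⁻¹ * ∑ q ∈ T, ‖(2 : ℝ)⁻¹ • (w q.1 - w q.2)‖ ^ p)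
      ≤ (M : ℝ)⁻¹ * ∑ j ∈ Finset.range M, ‖w j‖ ^ p - ‖xb‖ ^ p := by
    have hTpos : (0 : ℝ) < (T.card : ℝ) := by rw [hTcard]; positivity
    have := mul_le_mul_of_nonneg_left hPC (le_of_lt (inv_pos.mpr hTpos))
    have hspl : (T.card : ℝ)⁻¹ * ((M : ℝ) * ∑ j ∈ Finset.range M, ‖w j‖ ^ p
        - K ^ (-p) * ∑ q ∈ T, ‖(2 : ℝ)⁻¹ • (w q.1 - w q.2)‖ ^ p)
        = (M : ℝ)⁻¹ * ∑ j ∈ Finset.range M, ‖w j‖ ^ p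
          - K ^ (-p) * ((T.card : ℝ)⁻¹ * ∑ q ∈ T, ‖(2 : ℝ)⁻¹ • (w q.1 - w q.2)‖ ^ p) := by
      rw [hTcard]; field_simp
    rw [hspl] at this
    linarith
  -- pointwise doubling identity
  have hpt : ∀ u : X, ‖u‖ ^ p = 2 ^ p * ‖(2:ℝ)⁻¹ • u‖ ^ p := by
    intro u
    rw [norm_smul, Real.norm_eq_abs, abs_of_nonneg (by norm_num : (0:ℝ) ≤ 2⁻¹),
      Real.mul_rpow (by norm_num) (norm_nonneg u), ← mul_assoc,
      ← Real.mul_rpow (by norm_num) (by norm_num)]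
    norm_num
  -- per-j Jensen for the deviation
  have hD : ∀ j ∈ Finset.range M,
      ‖w j - xb‖ ^ p ≤ (M : ℝ)⁻¹ * ∑ j' ∈ Finset.range M, ‖w j - w j'‖ ^ p := by
    intro j _
    have hid : w j - xb = (M : ℝ)⁻¹ • ∑ j' ∈ Finset.range M, (w j - w j') := by
      rw [Finset.sum_sub_distrib, Finset.sum_const, Finset.card_range,
        ← Nat.cast_smul_eq_nsmul ℝ, smul_sub, smul_smul,
        inv_mul_cancel₀ hMR.ne', one_smul, hxb]
    calc ‖w j - xb‖ ^ p
        = ‖(M : ℝ)⁻¹ • ∑ j' ∈ Finset.range M, (w j - w j')‖ ^ p := by rw [hid]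
      _ ≤ (M : ℝ)⁻¹ * ∑ j' ∈ Finset.range M, ‖w j - w j'‖ ^ p := by
          have := jensen_norm_rpow (X := X) hp (Finset.range M)
            (Finset.nonempty_range_iff.mpr hM.ne') (fun j' => w j - w j')
          rwa [Finset.card_range] at this
  -- sum over j
  have hF : (M : ℝ)⁻¹ * ∑ j ∈ Finset.range M, ‖w j - xb‖ ^ p
      ≤ 2 ^ p * ((T.card : ℝ)⁻¹ * ∑ q ∈ T, ‖(2:ℝ)⁻¹ • (w q.1 - w q.2)‖ ^ p) := by
    have h1 : ∑ j ∈ Finset.range M, ‖w j - xb‖ ^ p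
        ≤ ∑ j ∈ Finset.range M, ((M : ℝ)⁻¹ * ∑ j' ∈ Finset.range M, ‖w j - w j'‖ ^ p) :=
      Finset.sum_le_sum hD
    have h2 : ∑ j ∈ Finset.range M, ((M : ℝ)⁻¹ * ∑ j' ∈ Finset.range M, ‖w j - w j'‖ ^ p)
        = (M : ℝ)⁻¹ * (2 ^ p * ∑ q ∈ T, ‖(2:ℝ)⁻¹ • (w q.1 - w q.2)‖ ^ p) := by
      rw [← Finset.mul_sum]
      congr 1
      rw [Finset.mul_sum, hT, Finset.sum_product]
      exact Finset.sum_congr rfl fun j _ => Finset.sum_congr rfl fun j' _ => hpt _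
    have hTpos : (0 : ℝ) < (T.card : ℝ) := by rw [hTcard]; positivity
    calc (M : ℝ)⁻¹ * ∑ j ∈ Finset.range M, ‖w j - xb‖ ^ p
        ≤ (M : ℝ)⁻¹ * ∑ j ∈ Finset.range M,
            ((M : ℝ)⁻¹ * ∑ j' ∈ Finset.range M, ‖w j - w j'‖ ^ p) := by
          apply mul_le_mul_of_nonneg_left h1 (by positivity)
      _ = 2 ^ p * ((T.card : ℝ)⁻¹ * ∑ q ∈ T, ‖(2:ℝ)⁻¹ • (w q.1 - w q.2)‖ ^ p) := by
          rw [h2, hTcard]; field_simp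
  -- conclude
  have hKp : (0 : ℝ) < K ^ p := Real.rpow_pos_of_pos hK p
  have hCK : (T.card : ℝ)⁻¹ * ∑ q ∈ T, ‖(2:ℝ)⁻¹ • (w q.1 - w q.2)‖ ^ p
      ≤ K ^ p * ((M : ℝ)⁻¹ * ∑ j ∈ Finset.range M, ‖w j‖ ^ p - ‖xb‖ ^ p) := by
    have hKneg : K ^ (-p) = (K ^ p)⁻¹ := Real.rpow_neg hK.le p
    rw [hKneg] at hC
    exact (inv_mul_le_iff₀ hKp).mp hC
  have h2K : (2 * K) ^ p = 2 ^ p * K ^ p := Real.mul_rpow (by norm_num) hK.le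
  calc (M : ℝ)⁻¹ * ∑ j ∈ Finset.range M, ‖w j - xb‖ ^ p
      ≤ 2 ^ p * ((T.card : ℝ)⁻¹ * ∑ q ∈ T, ‖(2:ℝ)⁻¹ • (w q.1 - w q.2)‖ ^ p) := hF
    _ ≤ 2 ^ p * (K ^ p * ((M : ℝ)⁻¹ * ∑ j ∈ Finset.range M, ‖w j‖ ^ p - ‖xb‖ ^ p)) := by
        apply mul_le_mul_of_nonneg_left hCK (by positivity)
    _ = (2 * K) ^ p * ((M : ℝ)⁻¹ * ∑ j ∈ Finset.range M, ‖w j‖ ^ p - ‖xb‖ ^ p) := by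
        rw [h2K]; ring


end HeisAux

open HeisAux

section PopAux

open Finset

variable {X : Type*} [NormedAddCommGroup X] [NormedSpace ℝ X]
variable (π : Heis →* (X ≃ₗᵢ[ℝ] X))

lemma pi_mul_apply (x y : Heis) (v : X) : π x (π y v) = π (x * y) v := by
  rw [map_mul, LinearIsometryEquiv.coe_mul, Function.comp_apply]

lemma pi_one_apply (v : X) : π 1 v = v := by
  rw [map_one, LinearIsometryEquiv.coe_one, id_eq]

lemma Pop_apply_eq (n : ℕ) (v : X) :
    Pop π n v = ((2 : ℝ) ^ n)⁻¹ • ∑ q ∈ Finset.range (2 ^ n), π (Heis.C ^ q) v := by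
  unfold Pop
  congr 1
  refine Finset.sum_congr rfl fun q _ => ?_
  rw [map_pow]

lemma Pop_comm (n : ℕ) (g : Heis) (v : X) : Pop π n (π g v) = π g (Pop π n v) := by
  rw [Pop_apply_eq, Pop_apply_eq, map_smul, map_sum]
  congr 1
  refine Finset.sum_congr rfl fun q _ => ?_
  rw [pi_mul_apply, pi_mul_apply, C_pow_central]

lemma Pop_add (n : ℕ) (v u : X) : Pop π n (v + u) = Pop π n v + Pop π n u := by
  rw [Pop_apply_eq, Pop_apply_eq, Pop_apply_eq, ← smul_add, ← Finset.sum_add_distrib]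
  congr 1
  exact Finset.sum_congr rfl fun q _ => map_add _ _ _

lemma Pop_sub (n : ℕ) (v u : X) : Pop π n (v - u) = Pop π n v - Pop π n u := by
  rw [Pop_apply_eq, Pop_apply_eq, Pop_apply_eq, ← smul_sub, ← Finset.sum_sub_distrib]
  congr 1
  exact Finset.sum_congr rfl fun q _ => map_sub _ _ _

lemma Pop_norm_le (n : ℕ) (v : X) : ‖Pop π n v‖ ≤ ‖v‖ := by
  rw [Pop_apply_eq, norm_smul, Real.norm_eq_abs, abs_of_nonneg (by positivity)]
  calc ((2 : ℝ) ^ n)⁻¹ * ‖∑ q ∈ Finset.range (2 ^ n), π (Heis.C ^ q) v‖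
      ≤ ((2 : ℝ) ^ n)⁻¹ * ∑ q ∈ Finset.range (2 ^ n), ‖π (Heis.C ^ q) v‖ := by
        have := norm_sum_le (Finset.range (2 ^ n)) (fun q => π (Heis.C ^ q) v)
        gcongr
    _ = ((2 : ℝ) ^ n)⁻¹ * ∑ q ∈ Finset.range (2 ^ n), ‖v‖ := by
        congr 1
        exact Finset.sum_congr rfl fun q _ => LinearIsometryEquiv.norm_map _ _
    _ = ‖v‖ := by
        rw [Finset.sum_const, Finset.card_range, nsmul_eq_mul]
        rw [← mul_assoc]
        have h2 : ((2 : ℝ) ^ n) ≠ 0 := by positivity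
        push_cast
        field_simp

lemma sum_range_mul_blocks {M : Type*} [AddCommMonoid M] (F : ℕ → M) (a b : ℕ) :
    ∑ q ∈ Finset.range (a * b), F q
      = ∑ j ∈ Finset.range a, ∑ r ∈ Finset.range b, F (j * b + r) := by
  induction a with
  | zero => simp
  | succ a ih =>
    rw [Finset.sum_range_succ, ← ih, Nat.succ_mul, Finset.sum_range_add]

lemma Pop_split (s t : ℕ) (v : X) :
    Pop π (s + t) v
      = ((2 : ℝ) ^ t)⁻¹ • ∑ j ∈ Finset.range (2 ^ t),
          π (Heis.C ^ (j * 2 ^ s)) (Pop π s v) := by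
  have hsum : ∀ j, π (Heis.C ^ (j * 2 ^ s)) (Pop π s v)
      = ((2 : ℝ) ^ s)⁻¹ • ∑ r ∈ Finset.range (2 ^ s), π (Heis.C ^ (j * 2 ^ s + r)) v := by
    intro j
    rw [Pop_apply_eq, map_smul, map_sum]
    congr 1
    refine Finset.sum_congr rfl fun r _ => ?_
    rw [pi_mul_apply, ← pow_add]
  calc Pop π (s + t) v
      = ((2 : ℝ) ^ (s + t))⁻¹ • ∑ q ∈ Finset.range (2 ^ t * 2 ^ s), π (Heis.C ^ q) v := by
        rw [Pop_apply_eq, show (2 : ℕ) ^ (s + t) = 2 ^ t * 2 ^ s from by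
          rw [pow_add, Nat.mul_comm]]
    _ = ((2 : ℝ) ^ (s + t))⁻¹ • ∑ j ∈ Finset.range (2 ^ t), ∑ r ∈ Finset.range (2 ^ s),
          π (Heis.C ^ (j * 2 ^ s + r)) v := by
        rw [sum_range_mul_blocks (fun q => π (Heis.C ^ q) v) (2 ^ t) (2 ^ s)]
    _ = ((2 : ℝ) ^ t)⁻¹ • ∑ j ∈ Finset.range (2 ^ t),
          π (Heis.C ^ (j * 2 ^ s)) (Pop π s v) := by
        rw [Finset.sum_congr rfl fun j _ => hsum j, ← Finset.smul_sum, smul_smul, pow_add]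
        congr 1
        field_simp

end PopAux

section DopAux

open Finset

variable {X : Type*} [NormedAddCommGroup X] [NormedSpace ℝ X]
variable (π : Heis →* (X ≃ₗᵢ[ℝ] X))

/-- The difference operator appearing in the statement. -/
noncomputable def Dop (ℓ i j : ℕ) (v : X) : X :=
  π ((Heis.C ^ (j * 2 ^ (i * ℓ)))⁻¹) (Pop π ((i + 1) * ℓ) v) - Pop π (i * ℓ) v

lemma Dop_add (ℓ i j : ℕ) (v u : X) :
    Dop π ℓ i j (v + u) = Dop π ℓ i j v + Dop π ℓ i j u := by
  unfold Dop
  rw [Pop_add, Pop_add, map_add]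
  abel

lemma Dop_sub (ℓ i j : ℕ) (v u : X) :
    Dop π ℓ i j (v - u) = Dop π ℓ i j v - Dop π ℓ i j u := by
  unfold Dop
  rw [Pop_sub, Pop_sub, map_sub]
  abel

lemma Dop_zero (ℓ i j : ℕ) : Dop π ℓ i j (0 : X) = 0 := by
  have := Dop_sub π ℓ i j (0 : X) 0
  simpa using this

lemma Dop_comm (ℓ i j : ℕ) (g : Heis) (v : X) :
    Dop π ℓ i j (π g v) = π g (Dop π ℓ i j v) := by
  unfold Dop
  rw [Pop_comm, Pop_comm, map_sub, pi_mul_apply, pi_mul_apply,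
    inv_central (C_pow_central (j * 2 ^ (i * ℓ))) g]

lemma Dop_sum (ℓ i j : ℕ) {ι : Type*} (s : Finset ι) (v : ι → X) :
    Dop π ℓ i j (∑ q ∈ s, v q) = ∑ q ∈ s, Dop π ℓ i j (v q) := by
  classical
  induction s using Finset.induction with
  | empty => simpa using Dop_zero π ℓ i j
  | @insert a s hne ih =>
    rw [Finset.sum_insert hne, Finset.sum_insert hne, Dop_add, ih]

end DopAux

section KeyAux

open Finset

variable {X : Type*} [NormedAddCommGroup X] [NormedSpace ℝ X]

lemma norm_pi_sub (π : Heis →* (X ≃ₗᵢ[ℝ] X)) (y : Heis) (u1 u2 : X) :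
    ‖π y u1 - u2‖ = ‖u1 - π y⁻¹ u2‖ := by
  calc ‖π y u1 - u2‖ = ‖π y⁻¹ (π y u1 - u2)‖ := (LinearIsometryEquiv.norm_map _ _).symm
    _ = ‖π y⁻¹ (π y u1) - π y⁻¹ u2‖ := by rw [map_sub]
    _ = ‖u1 - π y⁻¹ u2‖ := by rw [pi_mul_apply, inv_mul_cancel, pi_one_apply]

lemma key_i {p K : ℝ} (hp : 1 ≤ p) (hK : 0 < K) (hX : PConvex X p K)
    (π : Heis →* (X ≃ₗᵢ[ℝ] X)) (ℓ i : ℕ) (x : X) :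
    ((2 : ℝ) ^ ℓ)⁻¹ * ∑ j ∈ Finset.range (2 ^ ℓ), ‖Dop π ℓ i j x‖ ^ p
      ≤ (2 * K) ^ p * (‖Pop π (i * ℓ) x‖ ^ p - ‖Pop π ((i + 1) * ℓ) x‖ ^ p) := by
  set M : ℕ := 2 ^ ℓ with hM
  have hMpos : 0 < M := Nat.pow_pos (by norm_num)
  set w : ℕ → X := fun j => π (Heis.C ^ (j * 2 ^ (i * ℓ))) (Pop π (i * ℓ) x) with hw
  have hcast : ((M : ℕ) : ℝ) = (2 : ℝ) ^ ℓ := by rw [hM]; push_cast; ring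
  have hxbar : (M : ℝ)⁻¹ • ∑ j' ∈ Finset.range M, w j' = Pop π ((i + 1) * ℓ) x := by
    rw [hcast, show (i + 1) * ℓ = i * ℓ + ℓ from by ring, Pop_split]
  have hvar := varineq hp hK hX M hMpos w
  rw [hxbar] at hvar
  have hwnorm : ∀ j ∈ Finset.range M, ‖w j‖ ^ p = ‖Pop π (i * ℓ) x‖ ^ p := by
    intro j _
    rw [hw]
    simp only []
    rw [LinearIsometryEquiv.norm_map]
  have hconst : (M : ℝ)⁻¹ * ∑ j ∈ Finset.range M, ‖w j‖ ^ p = ‖Pop π (i * ℓ) x‖ ^ p := by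
    rw [Finset.sum_congr rfl hwnorm, Finset.sum_const, Finset.card_range, nsmul_eq_mul,
      ← mul_assoc, inv_mul_cancel₀ (by positivity : ((M : ℕ) : ℝ) ≠ 0), one_mul]
  rw [hconst] at hvar
  have hdev : ∀ j ∈ Finset.range M,
      ‖w j - Pop π ((i + 1) * ℓ) x‖ ^ p = ‖Dop π ℓ i j x‖ ^ p := by
    intro j _
    congr 1
    rw [hw]
    simp only []
    rw [norm_pi_sub, norm_sub_rev]
    rfl
  rw [Finset.sum_congr rfl hdev] at hvar
  rw [← hcast]
  exact hvar

end KeyAux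

section Pigeon

lemma exists_le_div {ι : Type*} (s : Finset ι) (hs : s.Nonempty) (g : ι → ℝ) {B : ℝ}
    (h : ∑ i ∈ s, g i ≤ B) : ∃ i ∈ s, g i ≤ B / s.card := by
  by_contra hc
  push_neg at hc
  have hcard : (0 : ℝ) < s.card := by exact_mod_cast Finset.card_pos.mpr hs
  have hlt : ∑ i ∈ s, (B / s.card) < ∑ i ∈ s, g i :=
    Finset.sum_lt_sum_of_nonempty hs hc
  rw [Finset.sum_const, nsmul_eq_mul] at hlt
  rw [mul_div_cancel₀ B hcard.ne'] at hlt
  linarith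

end Pigeon

/-- **Lemma 4.1.** Let `p ≥ 2`, `K > 0`, `(X, ‖·‖)` a `p`-convex Banach space with constant
`K`, `π` an action of `ℍ` on `X` by linear isometric automorphisms and `f : ℍ → X` a
`1`-Lipschitz `1`-cocycle. Then for all `ℓ, k, m ∈ ℕ` there are integers `i ∈ [k+1, k+m]`
and `j ∈ [0, 2^ℓ − 1]` such that for all `n ∈ ℕ`,
`‖π(c^{−j·2^{iℓ}}) P_{(i+1)ℓ} f(c^{n²}) − P_{iℓ} f(c^{n²})‖ ≤ 16·K·n/m^{1/p}`. -/
theorem heisenberg_cocycle_consecutive_averages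
    (X : Type*) [NormedAddCommGroup X] [NormedSpace ℝ X]
    (p K : ℝ) (hp : 2 ≤ p) (hK : 0 < K) (hX : PConvex X p K)
    (π : Heis →* (X ≃ₗᵢ[ℝ] X))
    (f : Heis → X) (hcocycle : ∀ g h : Heis, f (g * h) = π g (f h) + f g)
    (hLip : ∀ g h : Heis, ‖f g - f h‖ ≤ (Heis.dW g h : ℝ))
    (ℓ k m : ℕ) (hℓ : 1 ≤ ℓ) (hk : 1 ≤ k) (hm : 1 ≤ m) :
    ∃ i j : ℕ, k + 1 ≤ i ∧ i ≤ k + m ∧ j < 2 ^ ℓ ∧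
      ∀ n : ℕ, 1 ≤ n →
        ‖π ((Heis.C ^ (j * 2 ^ (i * ℓ)))⁻¹) (Pop π ((i + 1) * ℓ) (f (Heis.C ^ (n ^ 2)))) -
            Pop π (i * ℓ) (f (Heis.C ^ (n ^ 2)))‖ ≤
          16 * K * (n : ℝ) / (m : ℝ) ^ (1 / p) := by
  classical
  have hp1 : (1 : ℝ) ≤ p := by linarith
  have hp0 : (0 : ℝ) < p := by linarith
  have hKp : (0 : ℝ) < (2 * K) ^ p := Real.rpow_pos_of_pos (by linarith) p
  have hmR : (0 : ℝ) < (m : ℝ) := by exact_mod_cast hm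
  -- cocycle basics
  have hf1 : f 1 = 0 := by
    have h := hcocycle 1 1
    rw [one_mul, pi_one_apply] at h
    exact left_eq_add.mp h
  have hfinv : ∀ g : Heis, f g⁻¹ = - π g⁻¹ (f g) := by
    intro g
    have h := hcocycle g⁻¹ g
    rw [inv_mul_cancel, hf1] at h
    exact eq_neg_of_add_eq_zero_right h.symm
  have hfpow : ∀ (g : Heis) (n : ℕ), f (g ^ n) = ∑ q ∈ Finset.range n, π (g ^ q) (f g) := by
    intro g n
    induction n with
    | zero => simpa using hf1
    | succ n ih =>
      rw [pow_succ, hcocycle (g ^ n) g, ih, Finset.sum_range_succ]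
      abel
  have hnormA : ‖f Heis.A‖ ≤ 1 := by
    have h := hLip Heis.A 1
    rw [hf1, sub_zero] at h
    refine h.trans ?_
    have h2 : Heis.dW Heis.A 1 ≤ 1 := by
      unfold Heis.dW
      rw [mul_one]
      exact wordLength_le_one A_inv_mem
    exact_mod_cast h2
  have hnormB : ‖f Heis.B‖ ≤ 1 := by
    have h := hLip Heis.B 1
    rw [hf1, sub_zero] at h
    refine h.trans ?_
    have h2 : Heis.dW Heis.B 1 ≤ 1 := by
      unfold Heis.dW
      rw [mul_one]
      exact wordLength_le_one B_inv_mem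
    exact_mod_cast h2
  have hcommutator : ∀ g h : Heis,
      f (g * h * g⁻¹ * h⁻¹)
        = (π g (f h) - π (g * h * g⁻¹ * h⁻¹) (f h)) + (f g - π (g * h * g⁻¹) (f g)) := by
    intro g h
    have e1 : f (g * h * g⁻¹ * h⁻¹) = - π (g * h * g⁻¹ * h⁻¹) (f h) + f (g * h * g⁻¹) := by
      have e := hcocycle (g * h * g⁻¹) h⁻¹
      rw [hfinv h, map_neg, pi_mul_apply] at e
      exact e
    have e2 : f (g * h * g⁻¹) = - π (g * h * g⁻¹) (f g) + f (g * h) := by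
      have e := hcocycle (g * h) g⁻¹
      rw [hfinv g, map_neg, pi_mul_apply] at e
      exact e
    rw [e1, e2, hcocycle g h]
    abel
  -- telescoping over scales
  have htel : ∀ x : X,
      ∑ i ∈ Finset.Ico (k + 1) (k + m + 1),
        (((2 : ℝ) ^ ℓ)⁻¹ * ∑ j ∈ Finset.range (2 ^ ℓ), ‖Dop π ℓ i j x‖ ^ p)
        ≤ (2 * K) ^ p * ‖x‖ ^ p := by
    intro x
    have h1 : ∀ i ∈ Finset.Ico (k + 1) (k + m + 1),
        (((2 : ℝ) ^ ℓ)⁻¹ * ∑ j ∈ Finset.range (2 ^ ℓ), ‖Dop π ℓ i j x‖ ^ p)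
          ≤ (2 * K) ^ p * (‖Pop π (i * ℓ) x‖ ^ p - ‖Pop π ((i + 1) * ℓ) x‖ ^ p) :=
      fun i _ => key_i hp1 hK hX π ℓ i x
    have h2 : ∑ i ∈ Finset.Ico (k + 1) (k + m + 1),
          (‖Pop π (i * ℓ) x‖ ^ p - ‖Pop π ((i + 1) * ℓ) x‖ ^ p)
        = ‖Pop π ((k + 1) * ℓ) x‖ ^ p - ‖Pop π ((k + 1 + m) * ℓ) x‖ ^ p := by
      rw [Finset.sum_Ico_eq_sum_range, show k + m + 1 - (k + 1) = m from by omega]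
      exact Finset.sum_range_sub' (fun t => ‖Pop π ((k + 1 + t) * ℓ) x‖ ^ p) m
    calc ∑ i ∈ Finset.Ico (k + 1) (k + m + 1),
          (((2 : ℝ) ^ ℓ)⁻¹ * ∑ j ∈ Finset.range (2 ^ ℓ), ‖Dop π ℓ i j x‖ ^ p)
        ≤ ∑ i ∈ Finset.Ico (k + 1) (k + m + 1),
            ((2 * K) ^ p * (‖Pop π (i * ℓ) x‖ ^ p - ‖Pop π ((i + 1) * ℓ) x‖ ^ p)) :=
          Finset.sum_le_sum h1
      _ = (2 * K) ^ p *
            (‖Pop π ((k + 1) * ℓ) x‖ ^ p - ‖Pop π ((k + 1 + m) * ℓ) x‖ ^ p) := by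
          rw [← Finset.mul_sum, h2]
      _ ≤ (2 * K) ^ p * ‖x‖ ^ p := by
          apply mul_le_mul_of_nonneg_left _ hKp.le
          have hnn : (0 : ℝ) ≤ ‖Pop π ((k + 1 + m) * ℓ) x‖ ^ p :=
            Real.rpow_nonneg (norm_nonneg _) p
          have hle : ‖Pop π ((k + 1) * ℓ) x‖ ^ p ≤ ‖x‖ ^ p :=
            Real.rpow_le_rpow (norm_nonneg _) (Pop_norm_le π _ x) hp0.le
          linarith
  -- the combined quantity and pigeonhole in i
  set G : ℕ → ℝ := fun i' =>
    ((2 : ℝ) ^ ℓ)⁻¹ * ∑ j' ∈ Finset.range (2 ^ ℓ),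
      (‖Dop π ℓ i' j' (f Heis.A)‖ ^ p + ‖Dop π ℓ i' j' (f Heis.B)‖ ^ p) with hG
  have hGdef : ∀ i', G i'
      = (((2 : ℝ) ^ ℓ)⁻¹ * ∑ j' ∈ Finset.range (2 ^ ℓ), ‖Dop π ℓ i' j' (f Heis.A)‖ ^ p)
        + (((2 : ℝ) ^ ℓ)⁻¹ * ∑ j' ∈ Finset.range (2 ^ ℓ), ‖Dop π ℓ i' j' (f Heis.B)‖ ^ p) := by
    intro i'
    have : G i' = ((2 : ℝ) ^ ℓ)⁻¹ * ∑ j' ∈ Finset.range (2 ^ ℓ),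
        (‖Dop π ℓ i' j' (f Heis.A)‖ ^ p + ‖Dop π ℓ i' j' (f Heis.B)‖ ^ p) := rfl
    rw [this, Finset.sum_add_distrib, mul_add]
  have hbudget : ∑ i' ∈ Finset.Ico (k + 1) (k + m + 1), G i' ≤ 2 * (2 * K) ^ p := by
    rw [Finset.sum_congr rfl fun i' _ => hGdef i', Finset.sum_add_distrib]
    have hA := htel (f Heis.A)
    have hB := htel (f Heis.B)
    have hA1 : ‖f Heis.A‖ ^ p ≤ 1 := Real.rpow_le_one (norm_nonneg _) hnormA hp0.le
    have hB1 : ‖f Heis.B‖ ^ p ≤ 1 := Real.rpow_le_one (norm_nonneg _) hnormB hp0.le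
    nlinarith [mul_le_mul_of_nonneg_left hA1 hKp.le, mul_le_mul_of_nonneg_left hB1 hKp.le]
  have hne : (Finset.Ico (k + 1) (k + m + 1)).Nonempty := by
    rw [Finset.nonempty_Ico]; omega
  obtain ⟨i, hiIco, hGi⟩ := exists_le_div _ hne G hbudget
  rw [Nat.card_Ico, show k + m + 1 - (k + 1) = m from by omega] at hGi
  -- pigeonhole in j
  have h2l : (0 : ℝ) < (2 : ℝ) ^ ℓ := by positivity
  have hsumj : ∑ j' ∈ Finset.range (2 ^ ℓ),
      (‖Dop π ℓ i j' (f Heis.A)‖ ^ p + ‖Dop π ℓ i j' (f Heis.B)‖ ^ p)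
      ≤ (2 : ℝ) ^ ℓ * (2 * (2 * K) ^ p / (m : ℝ)) := by
    have hGi2 : G i = ((2 : ℝ) ^ ℓ)⁻¹ * ∑ j' ∈ Finset.range (2 ^ ℓ),
        (‖Dop π ℓ i j' (f Heis.A)‖ ^ p + ‖Dop π ℓ i j' (f Heis.B)‖ ^ p) := rfl
    calc ∑ j' ∈ Finset.range (2 ^ ℓ),
        (‖Dop π ℓ i j' (f Heis.A)‖ ^ p + ‖Dop π ℓ i j' (f Heis.B)‖ ^ p)
        = (2 : ℝ) ^ ℓ * G i := by
          rw [hGi2, ← mul_assoc, mul_inv_cancel₀ h2l.ne', one_mul]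
      _ ≤ (2 : ℝ) ^ ℓ * (2 * (2 * K) ^ p / (m : ℝ)) :=
          mul_le_mul_of_nonneg_left hGi h2l.le
  obtain ⟨j, hjmem, hj⟩ := exists_le_div (Finset.range (2 ^ ℓ))
    (Finset.nonempty_range_iff.mpr (by positivity)) _ hsumj
  rw [Finset.card_range] at hj
  have hjR : ‖Dop π ℓ i j (f Heis.A)‖ ^ p + ‖Dop π ℓ i j (f Heis.B)‖ ^ p
      ≤ 2 * (2 * K) ^ p / (m : ℝ) := by
    refine hj.trans (le_of_eq ?_)
    rw [show (((2 : ℕ) ^ ℓ : ℕ) : ℝ) = (2 : ℝ) ^ ℓ from by push_cast; ring]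
    field_simp
  -- extract the two generator bounds
  have hroot : ∀ x : X, ‖x‖ ^ p ≤ 2 * (2 * K) ^ p / (m : ℝ) →
      ‖x‖ ≤ 4 * K / (m : ℝ) ^ (1 / p) := by
    intro x hx
    have hmp : (0 : ℝ) < (m : ℝ) ^ (1 / p) := Real.rpow_pos_of_pos hmR _
    have h1 : ‖x‖ = (‖x‖ ^ p) ^ (1 / p) := by
      rw [← Real.rpow_mul (norm_nonneg x), mul_one_div, div_self hp0.ne', Real.rpow_one]
    have h2 : (‖x‖ ^ p) ^ (1 / p) ≤ (2 * (2 * K) ^ p / (m : ℝ)) ^ (1 / p) :=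
      Real.rpow_le_rpow (Real.rpow_nonneg (norm_nonneg x) p) hx (by positivity)
    have h3 : (2 * (2 * K) ^ p / (m : ℝ)) ^ (1 / p)
        = 2 ^ (1 / p) * (2 * K) / (m : ℝ) ^ (1 / p) := by
      rw [Real.div_rpow (by positivity) hmR.le,
        Real.mul_rpow (by norm_num) hKp.le,
        ← Real.rpow_mul (by positivity : (0:ℝ) ≤ 2 * K), mul_one_div,
        div_self hp0.ne', Real.rpow_one]
    have h4 : (2 : ℝ) ^ (1 / p) ≤ 2 := by
      have h5 := Real.rpow_le_rpow_of_exponent_le (one_le_two)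
        (show 1 / p ≤ 1 by rw [div_le_one hp0]; exact hp1)
      rwa [Real.rpow_one] at h5
    calc ‖x‖ = (‖x‖ ^ p) ^ (1 / p) := h1
      _ ≤ (2 * (2 * K) ^ p / (m : ℝ)) ^ (1 / p) := h2
      _ = 2 ^ (1 / p) * (2 * K) / (m : ℝ) ^ (1 / p) := h3
      _ ≤ 2 * (2 * K) / (m : ℝ) ^ (1 / p) := by gcongr
      _ = 4 * K / (m : ℝ) ^ (1 / p) := by ring
  have hDAp : ‖Dop π ℓ i j (f Heis.A)‖ ^ p ≤ 2 * (2 * K) ^ p / (m : ℝ) := by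
    have := Real.rpow_nonneg (norm_nonneg (Dop π ℓ i j (f Heis.B))) p
    linarith
  have hDBp : ‖Dop π ℓ i j (f Heis.B)‖ ^ p ≤ 2 * (2 * K) ^ p / (m : ℝ) := by
    have := Real.rpow_nonneg (norm_nonneg (Dop π ℓ i j (f Heis.A))) p
    linarith
  have hdA : ‖Dop π ℓ i j (f Heis.A)‖ ≤ 4 * K / (m : ℝ) ^ (1 / p) := hroot _ hDAp
  have hdB : ‖Dop π ℓ i j (f Heis.B)‖ ≤ 4 * K / (m : ℝ) ^ (1 / p) := hroot _ hDBp
  -- conclude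
  refine ⟨i, j, (Finset.mem_Ico.mp hiIco).1, ?_, Finset.mem_range.mp hjmem, ?_⟩
  · have := (Finset.mem_Ico.mp hiIco).2; omega
  intro n hn
  show ‖Dop π ℓ i j (f (Heis.C ^ (n ^ 2)))‖ ≤ 16 * K * (n : ℝ) / (m : ℝ) ^ (1 / p)
  have hz := hcommutator (Heis.A ^ n) (Heis.B ^ n)
  rw [comm_identity n] at hz
  have hDz : Dop π ℓ i j (f (Heis.C ^ (n ^ 2)))
      = (π (Heis.A ^ n) (Dop π ℓ i j (f (Heis.B ^ n)))
          - π (Heis.C ^ (n ^ 2)) (Dop π ℓ i j (f (Heis.B ^ n))))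
        + (Dop π ℓ i j (f (Heis.A ^ n))
          - π (Heis.A ^ n * Heis.B ^ n * (Heis.A ^ n)⁻¹) (Dop π ℓ i j (f (Heis.A ^ n)))) := by
    rw [hz, Dop_add, Dop_sub, Dop_sub, Dop_comm, Dop_comm, Dop_comm]
  have hDpow : ∀ g : Heis, ‖Dop π ℓ i j (f (g ^ n))‖ ≤ (n : ℝ) * ‖Dop π ℓ i j (f g)‖ := by
    intro g
    rw [hfpow g n, Dop_sum]
    calc ‖∑ q ∈ Finset.range n, Dop π ℓ i j (π (g ^ q) (f g))‖
        ≤ ∑ q ∈ Finset.range n, ‖Dop π ℓ i j (π (g ^ q) (f g))‖ := norm_sum_le _ _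
      _ = ∑ q ∈ Finset.range n, ‖Dop π ℓ i j (f g)‖ := by
          refine Finset.sum_congr rfl fun q _ => ?_
          rw [Dop_comm, LinearIsometryEquiv.norm_map]
      _ = (n : ℝ) * ‖Dop π ℓ i j (f g)‖ := by
          rw [Finset.sum_const, Finset.card_range, nsmul_eq_mul]
  have hbound : ‖Dop π ℓ i j (f (Heis.C ^ (n ^ 2)))‖
      ≤ 2 * ‖Dop π ℓ i j (f (Heis.B ^ n))‖ + 2 * ‖Dop π ℓ i j (f (Heis.A ^ n))‖ := by
    rw [hDz]
    have t1 := norm_add_le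
      (π (Heis.A ^ n) (Dop π ℓ i j (f (Heis.B ^ n)))
        - π (Heis.C ^ (n ^ 2)) (Dop π ℓ i j (f (Heis.B ^ n))))
      (Dop π ℓ i j (f (Heis.A ^ n))
        - π (Heis.A ^ n * Heis.B ^ n * (Heis.A ^ n)⁻¹) (Dop π ℓ i j (f (Heis.A ^ n))))
    have t2 := norm_sub_le (π (Heis.A ^ n) (Dop π ℓ i j (f (Heis.B ^ n))))
      (π (Heis.C ^ (n ^ 2)) (Dop π ℓ i j (f (Heis.B ^ n))))
    have t3 := norm_sub_le (Dop π ℓ i j (f (Heis.A ^ n)))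
      (π (Heis.A ^ n * Heis.B ^ n * (Heis.A ^ n)⁻¹) (Dop π ℓ i j (f (Heis.A ^ n))))
    rw [LinearIsometryEquiv.norm_map, LinearIsometryEquiv.norm_map] at t2
    rw [LinearIsometryEquiv.norm_map] at t3
    linarith
  have hnR : (0 : ℝ) ≤ (n : ℝ) := Nat.cast_nonneg n
  have hmp : (0 : ℝ) < (m : ℝ) ^ (1 / p) := Real.rpow_pos_of_pos hmR _
  calc ‖Dop π ℓ i j (f (Heis.C ^ (n ^ 2)))‖
      ≤ 2 * ‖Dop π ℓ i j (f (Heis.B ^ n))‖ + 2 * ‖Dop π ℓ i j (f (Heis.A ^ n))‖ := hbound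
    _ ≤ 2 * ((n : ℝ) * ‖Dop π ℓ i j (f Heis.B)‖)
        + 2 * ((n : ℝ) * ‖Dop π ℓ i j (f Heis.A)‖) := by
        have hA := hDpow Heis.A
        have hB := hDpow Heis.B
        linarith
    _ ≤ 2 * ((n : ℝ) * (4 * K / (m : ℝ) ^ (1 / p)))
        + 2 * ((n : ℝ) * (4 * K / (m : ℝ) ^ (1 / p))) := by
        have hA := mul_le_mul_of_nonneg_left hdA hnR
        have hB := mul_le_mul_of_nonneg_left hdB hnR
        linarith
    _ = 16 * K * (n : ℝ) / (m : ℝ) ^ (1 / p) := by ring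
end
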